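/- (Eigenvalue simulation.) Let H be a Hermitian N × N matrix over ℂ and let H_sim be a Hermitian M × M matrix over ℂ with M ≥ N. Suppose (H_sim, E) simulates H with error (η, ε) for some isometry E : ℂ^N → ℂ^M. Then for every 1 ≤ i ≤ N, the i-th smallest eigenvalue of H_sim (counted with multiplicity) differs from the i-th smallest eigenvalue of H by at most ε. -/

import Mathlib

open Matrix

noncomputable def opNorm {m n : Type*} [Fintype m] [Fintype n] [DecidableEq n]
    (A : Matrix m n ℂ) : ℝ :=
  ‖LinearMap.toContinuousLinearMap (Matrix.toEuclideanLin A)‖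

noncomputable def vecNorm {n : Type*} [Fintype n] (x : n → ℂ) : ℝ :=
  Real.sqrt (∑ i, ‖x i‖ ^ 2)

/-- `lam` is the list of eigenvalues of `A` in nondecreasing order, counted with
multiplicity: it is monotone and there is an orthonormal eigenbasis realizing it. -/
def IsSortedSpectrum {M : ℕ} (A : Matrix (Fin M) (Fin M) ℂ) (lam : Fin M → ℝ) : Prop :=
  Monotone lam ∧ ∃ w : Fin M → (Fin M → ℂ),
    (∀ i j, star (w i) ⬝ᵥ w j = if i = j then 1 else 0) ∧
    ∀ i, A.mulVec (w i) = (lam i : ℂ) • w i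

/-- `(Hsim, E)` simulates `H` with error `(η, ε)`: there is an isometry `Et` whose image
is spanned by `N` orthonormal eigenvectors of `Hsim` with the `N` smallest eigenvalues
(S1), with `‖H - Etᴴ Hsim Et‖ ≤ ε` (S2) and `‖E - Et‖ ≤ η` (S3). -/
def Simulates {N M : ℕ} (hNM : N ≤ M) (Hsim : Matrix (Fin M) (Fin M) ℂ)
    (E : Matrix (Fin M) (Fin N) ℂ) (H : Matrix (Fin N) (Fin N) ℂ) (η ε : ℝ) : Prop :=
  ∃ (lam : Fin M → ℝ) (Et : Matrix (Fin M) (Fin N) ℂ) (v : Fin N → (Fin M → ℂ)),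
    IsSortedSpectrum Hsim lam ∧
    Etᴴ * Et = 1 ∧
    (∀ i j, star (v i) ⬝ᵥ v j = if i = j then 1 else 0) ∧
    (∀ i, Hsim.mulVec (v i) = (lam (Fin.castLE hNM i) : ℂ) • v i) ∧
    LinearMap.range Et.mulVecLin = Submodule.span ℂ (Set.range v) ∧
    opNorm (H - Etᴴ * Hsim * Et) ≤ ε ∧
    opNorm (E - Et) ≤ η

/-! ### Auxiliary lemmas -/

section Aux

lemma opNorm_neg' {m n : ℕ} (A : Matrix (Fin m) (Fin n) ℂ) : opNorm (-A) = opNorm A := by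
  unfold opNorm
  rw [map_neg, map_neg, norm_neg]

lemma opNorm_zero' {m n : ℕ} : opNorm (0 : Matrix (Fin m) (Fin n) ℂ) = 0 := by
  unfold opNorm
  rw [map_zero, map_zero, norm_zero]

lemma rayleigh_bound {n : ℕ} (C : Matrix (Fin n) (Fin n) ℂ) (x : Fin n → ℂ) :
    (star x ⬝ᵥ (C *ᵥ x)).re ≤ opNorm C * (star x ⬝ᵥ x).re := by
  set y : EuclideanSpace ℂ (Fin n) := (WithLp.equiv 2 _).symm x with hy
  have h1 : star x ⬝ᵥ (C *ᵥ x) = inner ℂ y (Matrix.toEuclideanLin C y) := by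
    rw [dotProduct_comm]; rfl
  have h2 : (star x ⬝ᵥ x).re = ‖y‖^2 := by
    rw [dotProduct_comm, show x ⬝ᵥ star x = inner ℂ y y from rfl]
    exact_mod_cast inner_self_eq_norm_sq (𝕜 := ℂ) _
  rw [h1, h2]
  calc (inner ℂ y (Matrix.toEuclideanLin C y) : ℂ).re
      ≤ ‖(inner ℂ y (Matrix.toEuclideanLin C y) : ℂ)‖ := Complex.re_le_norm _
    _ ≤ ‖y‖ * ‖Matrix.toEuclideanLin C y‖ := norm_inner_le_norm _ _
    _ ≤ ‖y‖ * (opNorm C * ‖y‖) := by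
        refine mul_le_mul_of_nonneg_left ?_ (norm_nonneg _)
        have := ContinuousLinearMap.le_opNorm
          (LinearMap.toContinuousLinearMap (Matrix.toEuclideanLin C)) y
        unfold opNorm
        rwa [LinearMap.coe_toContinuousLinearMap'] at this
    _ = opNorm C * ‖y‖^2 := by ring

lemma card_le_subtype {n : ℕ} (i : Fin n) :
    Fintype.card {j : Fin n // j ≤ i} = i.1 + 1 := by
  have e : {j : Fin n // j ≤ i} ≃ Fin (i.1 + 1) :=
    { toFun := fun j => ⟨j.1.1, by have := j.2; rw [Fin.le_def] at this; omega⟩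
      invFun := fun k => ⟨⟨k.1, by have := i.2; omega⟩,
        by rw [Fin.le_def]; exact Nat.lt_succ_iff.mp k.2⟩
      left_inv := fun j => by ext; rfl
      right_inv := fun k => by ext; rfl }
  rw [Fintype.card_congr e, Fintype.card_fin]

lemma card_ge_subtype {n : ℕ} (i : Fin n) :
    Fintype.card {j : Fin n // i ≤ j} = n - i.1 := by
  have e : {j : Fin n // i ≤ j} ≃ Fin (n - i.1) :=
    { toFun := fun j => ⟨j.1.1 - i.1, by
        have := j.1.2; have h2 := j.2; rw [Fin.le_def] at h2; omega⟩
      invFun := fun k => ⟨⟨i.1 + k.1, by have := k.2; omega⟩,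
        by rw [Fin.le_def]; exact Nat.le_add_right _ _⟩
      left_inv := fun j => by ext; have h2 := j.2; rw [Fin.le_def] at h2; simp; omega
      right_inv := fun k => by ext; simp }
  rw [Fintype.card_congr e, Fintype.card_fin]

lemma ortho_li {n : ℕ} {ι : Type*} [Fintype ι] [DecidableEq ι] {w : ι → (Fin n → ℂ)}
    (hw : ∀ i j, star (w i) ⬝ᵥ w j = if i = j then 1 else 0) :
    LinearIndependent ℂ w := by
  rw [Fintype.linearIndependent_iff]
  intro c hc k
  have h : star (w k) ⬝ᵥ (∑ j, c j • w j) = c k := by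
    have hsum : star (w k) ⬝ᵥ (∑ j, c j • w j) = ∑ j, star (w k) ⬝ᵥ (c j • w j) := by
      simp only [dotProduct, Finset.sum_apply, Finset.mul_sum]
      exact Finset.sum_comm
    rw [hsum]
    simp [dotProduct_smul, hw, Finset.sum_ite_eq]
  rw [hc] at h
  simpa using h.symm

lemma dot_expand {n : ℕ} {ι : Type*} [Fintype ι] [DecidableEq ι] {w : ι → Fin n → ℂ}
    (hw : ∀ i j, star (w i) ⬝ᵥ w j = if i = j then 1 else 0) (c d : ι → ℂ) :
    star (∑ j, c j • w j) ⬝ᵥ (∑ k, d k • w k) = ∑ j, (starRingEnd ℂ) (c j) * d j := by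
  have hsum1 : ∀ u : Fin n → ℂ, u ⬝ᵥ (∑ k, d k • w k) = ∑ k, u ⬝ᵥ (d k • w k) := by
    intro u; simp only [dotProduct, Finset.sum_apply, Finset.mul_sum]; exact Finset.sum_comm
  have hsum2 : ∀ u : Fin n → ℂ, (∑ j, (starRingEnd ℂ) (c j) • star (w j)) ⬝ᵥ u
      = ∑ j, ((starRingEnd ℂ) (c j) • star (w j)) ⬝ᵥ u := by
    intro u; simp only [dotProduct, Finset.sum_apply, Finset.sum_mul]; exact Finset.sum_comm
  rw [star_sum]
  simp only [star_smul]
  have hss : ∀ j, star (c j) • star (w j) = (starRingEnd ℂ) (c j) • star (w j) := fun j => rfl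
  simp only [hss]
  rw [hsum2]
  simp only [hsum1, smul_dotProduct, dotProduct_smul, hw, smul_eq_mul]
  simp [mul_ite, Finset.sum_ite_eq, mul_comm, mul_assoc]

lemma eig_expand {n : ℕ} {ι : Type*} [Fintype ι] {A : Matrix (Fin n) (Fin n) ℂ}
    {w : ι → Fin n → ℂ} {μ : ι → ℝ} (heig : ∀ j, A *ᵥ w j = (μ j : ℂ) • w j) (c : ι → ℂ) :
    A *ᵥ (∑ j, c j • w j) = ∑ j, (c j * (μ j : ℂ)) • w j := by
  have h0 : A *ᵥ (∑ j, c j • w j) = A.mulVecLin (∑ j, c j • w j) := rfl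
  rw [h0, map_sum]
  refine Finset.sum_congr rfl fun j _ => ?_
  rw [LinearMap.map_smul, Matrix.mulVecLin_apply, heig, smul_smul]

lemma quad_re {n : ℕ} {ι : Type*} [Fintype ι] [DecidableEq ι]
    {A : Matrix (Fin n) (Fin n) ℂ} {w : ι → Fin n → ℂ} {μ : ι → ℝ}
    (hw : ∀ i j, star (w i) ⬝ᵥ w j = if i = j then 1 else 0)
    (heig : ∀ j, A *ᵥ w j = (μ j : ℂ) • w j) (c : ι → ℂ) :
    (star (∑ j, c j • w j) ⬝ᵥ (A *ᵥ (∑ j, c j • w j))).re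
      = ∑ j, μ j * Complex.normSq (c j) := by
  rw [eig_expand heig, dot_expand hw, Complex.re_sum]
  refine Finset.sum_congr rfl fun j _ => ?_
  rw [← mul_assoc, mul_comm ((starRingEnd ℂ) (c j)) (c j), Complex.mul_conj]
  simp [mul_comm]

lemma dot_self_re {n : ℕ} {ι : Type*} [Fintype ι] [DecidableEq ι]
    {w : ι → Fin n → ℂ}
    (hw : ∀ i j, star (w i) ⬝ᵥ w j = if i = j then 1 else 0) (c : ι → ℂ) :
    (star (∑ j, c j • w j) ⬝ᵥ (∑ j, c j • w j)).re = ∑ j, Complex.normSq (c j) := by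
  rw [dot_expand hw, Complex.re_sum]
  refine Finset.sum_congr rfl fun j _ => ?_
  rw [mul_comm, Complex.mul_conj]
  simp

lemma weyl_one_sided {n : ℕ} (A B : Matrix (Fin n) (Fin n) ℂ) (a b : Fin n → ℝ)
    (ha : IsSortedSpectrum A a) (hb : IsSortedSpectrum B b) (i : Fin n) :
    a i ≤ b i + opNorm (A - B) := by
  obtain ⟨hamono, w, hw, heigA⟩ := ha
  obtain ⟨hbmono, w', hw', heigB⟩ := hb
  set f : {j : Fin n // i ≤ j} → (Fin n → ℂ) := fun j => w j.1 with hf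
  set g : {j : Fin n // j ≤ i} → (Fin n → ℂ) := fun j => w' j.1 with hg
  have hwf : ∀ j k, star (f j) ⬝ᵥ f k = if j = k then 1 else 0 := by
    intro j k; rw [hf]; simp only []; rw [hw j.1 k.1]
    simp [Subtype.val_inj]
  have hwg : ∀ j k, star (g j) ⬝ᵥ g k = if j = k then 1 else 0 := by
    intro j k; rw [hg]; simp only []; rw [hw' j.1 k.1]
    simp [Subtype.val_inj]
  set V := Submodule.span ℂ (Set.range f) with hV
  set W := Submodule.span ℂ (Set.range g) with hW
  have hVrank : Module.finrank ℂ V = n - i.1 := by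
    rw [hV, finrank_span_eq_card (ortho_li hwf), card_ge_subtype]
  have hWrank : Module.finrank ℂ W = i.1 + 1 := by
    rw [hW, finrank_span_eq_card (ortho_li hwg), card_le_subtype]
  have hsum := Submodule.finrank_sup_add_finrank_inf_eq V W
  have hsup : Module.finrank ℂ ↥(V ⊔ W) ≤ n := by
    have := Submodule.finrank_le (V ⊔ W)
    rwa [Module.finrank_fin_fun] at this
  have hne : V ⊓ W ≠ ⊥ := by
    intro hbot
    rw [hbot, finrank_bot, add_zero] at hsum
    have hi := i.2
    omega
  obtain ⟨x, hxmem, hx0⟩ := (V ⊓ W).ne_bot_iff.mp hne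
  obtain ⟨hxV, hxW⟩ := Submodule.mem_inf.mp hxmem
  obtain ⟨c, hc⟩ := Submodule.mem_span_range_iff_exists_fun ℂ |>.mp hxV
  obtain ⟨d, hd⟩ := Submodule.mem_span_range_iff_exists_fun ℂ |>.mp hxW
  set s := (star x ⬝ᵥ x).re with hs
  have hspos : 0 < s := by
    have h2 : s = ‖(WithLp.equiv 2 (Fin n → ℂ)).symm x‖^2 := by
      rw [hs, dotProduct_comm, show x ⬝ᵥ star x = inner ℂ ((WithLp.equiv 2 (Fin n → ℂ)).symm x)
        ((WithLp.equiv 2 (Fin n → ℂ)).symm x) from rfl]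
      exact_mod_cast inner_self_eq_norm_sq (𝕜 := ℂ) _
    rw [h2]
    have : (0:ℝ) < ‖(WithLp.equiv 2 (Fin n → ℂ)).symm x‖ := by
      rw [norm_pos_iff]; simpa using hx0
    positivity
  have hsc : s = ∑ j, Complex.normSq (c j) := by rw [hs, ← hc, dot_self_re hwf]
  have hsd : s = ∑ j, Complex.normSq (d j) := by rw [hs, ← hd, dot_self_re hwg]
  have hA : (star x ⬝ᵥ (A *ᵥ x)).re = ∑ j, a j.1 * Complex.normSq (c j) := by
    rw [← hc]
    exact quad_re hwf (fun j => heigA j.1) c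
  have hB : (star x ⬝ᵥ (B *ᵥ x)).re = ∑ j, b j.1 * Complex.normSq (d j) := by
    rw [← hd]
    exact quad_re hwg (fun j => heigB j.1) d
  have hAlow : a i * s ≤ (star x ⬝ᵥ (A *ᵥ x)).re := by
    rw [hA, hsc, Finset.mul_sum]
    refine Finset.sum_le_sum fun j _ => ?_
    exact mul_le_mul_of_nonneg_right (hamono j.2) (Complex.normSq_nonneg _)
  have hBhigh : (star x ⬝ᵥ (B *ᵥ x)).re ≤ b i * s := by
    rw [hB, hsd, Finset.mul_sum]
    refine Finset.sum_le_sum fun j _ => ?_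
    exact mul_le_mul_of_nonneg_right (hbmono j.2) (Complex.normSq_nonneg _)
  have hsub : (star x ⬝ᵥ ((A - B) *ᵥ x)).re
      = (star x ⬝ᵥ (A *ᵥ x)).re - (star x ⬝ᵥ (B *ᵥ x)).re := by
    rw [Matrix.sub_mulVec, dotProduct_sub, Complex.sub_re]
  have hray := rayleigh_bound (A - B) x
  rw [hsub, ← hs] at hray
  have hmul : a i * s ≤ (b i + opNorm (A - B)) * s := by nlinarith
  exact le_of_mul_le_mul_right hmul hspos

lemma sorted_spectrum_unique {n : ℕ} (A : Matrix (Fin n) (Fin n) ℂ) (a b : Fin n → ℝ)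
    (ha : IsSortedSpectrum A a) (hb : IsSortedSpectrum A b) : a = b := by
  funext i
  have h1 := weyl_one_sided A A a b ha hb i
  have h2 := weyl_one_sided A A b a hb ha i
  rw [sub_self, opNorm_zero', add_zero] at h1 h2
  linarith

end Aux

/-- **Eigenvalue simulation** (Lemma 3.1): if `(Hsim, E)` simulates `H` with error
`(η, ε)` then the `i`-th smallest eigenvalues of `Hsim` and `H` differ by at most `ε`
for all `1 ≤ i ≤ N`. -/
theorem eigenvalue_simulation {N M : ℕ} (hNM : N ≤ M)
    (H : Matrix (Fin N) (Fin N) ℂ) (hH : H.IsHermitian)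
    (Hsim : Matrix (Fin M) (Fin M) ℂ) (hsim : Hsim.IsHermitian)
    (E : Matrix (Fin M) (Fin N) ℂ) (hE : Eᴴ * E = 1)
    (η ε : ℝ) (hsimul : Simulates hNM Hsim E H η ε)
    (lamH : Fin N → ℝ) (lamS : Fin M → ℝ)
    (hlamH : IsSortedSpectrum H lamH) (hlamS : IsSortedSpectrum Hsim lamS) :
    ∀ i : Fin N, |lamS (Fin.castLE hNM i) - lamH i| ≤ ε := by
  obtain ⟨lam, Et, v, hspec, hEt, hv, heigv, hrange, hnorm, -⟩ := hsimul
  have hlam : lamS = lam := sorted_spectrum_unique Hsim lamS lam hlamS hspec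
  have hproj : ∀ i, (Et * Etᴴ) *ᵥ v i = v i := by
    intro i
    have hvi : v i ∈ LinearMap.range Et.mulVecLin := by
      rw [hrange]; exact Submodule.subset_span ⟨i, rfl⟩
    obtain ⟨u0, hu0⟩ := hvi
    rw [Matrix.mulVecLin_apply] at hu0
    rw [← hu0, Matrix.mulVec_mulVec, Matrix.mul_assoc, hEt, Matrix.mul_one]
  have hu_orth : ∀ i j, star (Etᴴ *ᵥ v i) ⬝ᵥ (Etᴴ *ᵥ v j) = if i = j then 1 else 0 := by
    intro i j
    rw [Matrix.star_mulVec, Matrix.conjTranspose_conjTranspose,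
      ← Matrix.dotProduct_mulVec, Matrix.mulVec_mulVec, hproj, hv]
  have hu_eig : ∀ i, (Etᴴ * Hsim * Et) *ᵥ (Etᴴ *ᵥ v i)
      = ((lam (Fin.castLE hNM i) : ℂ)) • (Etᴴ *ᵥ v i) := by
    intro i
    rw [Matrix.mulVec_mulVec]
    have hassoc : Etᴴ * Hsim * Et * Etᴴ = Etᴴ * Hsim * (Et * Etᴴ) := by
      rw [Matrix.mul_assoc]
    rw [hassoc, ← Matrix.mulVec_mulVec, hproj, ← Matrix.mulVec_mulVec, heigv,
      Matrix.mulVec_smul]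
  have hK : IsSortedSpectrum (Etᴴ * Hsim * Et) (fun i => lam (Fin.castLE hNM i)) := by
    refine ⟨fun i j h => hspec.1 ?_, ⟨fun i => Etᴴ *ᵥ v i, hu_orth, hu_eig⟩⟩
    exact h
  intro i
  have h1 := weyl_one_sided H (Etᴴ * Hsim * Et) lamH
    (fun i => lam (Fin.castLE hNM i)) hlamH hK i
  have h2 := weyl_one_sided (Etᴴ * Hsim * Et) H
    (fun i => lam (Fin.castLE hNM i)) lamH hK hlamH i
  have hswap : opNorm (Etᴴ * Hsim * Et - H) = opNorm (H - Etᴴ * Hsim * Et) := by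
    rw [← opNorm_neg' (H - Etᴴ * Hsim * Et), neg_sub]
  rw [hswap] at h2
  rw [hlam, abs_le]
  constructor <;> linarith
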